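/- ∫_{−∞}^{∞} e^{−2λ²} dλ = √(π/2); more generally, for a unitary endomorphism A of ℂ^c with A − I invertible, ∫_{ℝ^{2c}} e^{ψ₂(An, n)} dn = π^c / |det_ℂ(I − A^{-1})| · (phase), and in particular when combined with the Gaussian in λ one gets ∫∫ e^{ψ₂(An,n) − 2λ²} dλ dn = (1/√2)·π^{c+1/2}/D where D = det_ℂ(I − A^{−1}). -/

import Mathlib

open Complex Real MeasureTheory

noncomputable instance (c : ℕ) : MeasurableSpace (EuclideanSpace ℂ (Fin c)) :=
  borel _

instance (c : ℕ) : BorelSpace (EuclideanSpace ℂ (Fin c)) := ⟨rfl⟩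

/-- The universal exponent `ψ₂(v₁,v₂) = −iω(v₁,v₂) − ½‖v₁−v₂‖²`, where
`ω = −Im h`. -/
noncomputable def psi2 {V : Type*} [NormedAddCommGroup V]
    [InnerProductSpace ℂ V] (v₁ v₂ : V) : ℂ :=
  -I * ((-(inner ℂ v₁ v₂ : ℂ).im : ℝ) : ℂ) - (1 / 2 : ℂ) * ((‖v₁ - v₂‖ : ℂ)) ^ 2

section Aux

local notation "⟪" x ", " y "⟫" => @inner ℂ _ _ x y


lemma integral_cexp_nu (ν : ℂ) (hν : ν.re < 0) :
    ∫ z : ℂ, Complex.exp (ν * Complex.normSq z) = ↑Real.pi / (-ν) := by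
  have hw : (↑Real.pi / (-ν)) ≠ 0 := by
    apply div_ne_zero
    · exact_mod_cast Real.pi_ne_zero
    · simpa using fun h => absurd (congrArg Complex.re h) (by simpa using hν.ne)
  have key : ∀ z : ℂ, Complex.exp (ν * Complex.normSq z)
      = (fun p : ℝ × ℝ => Complex.exp (ν * p.1 ^ 2) * Complex.exp (ν * p.2 ^ 2))
          (Complex.measurableEquivRealProd z) := by
    intro z
    have h0 : (Complex.measurableEquivRealProd z) = (z.re, z.im) := rfl
    rw [h0]
    show Complex.exp _ = Complex.exp _ * Complex.exp _
    rw [← Complex.exp_add, Complex.normSq_apply]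
    congr 1
    push_cast
    ring
  calc ∫ z : ℂ, Complex.exp (ν * Complex.normSq z)
      = ∫ p : ℝ × ℝ, Complex.exp (ν * p.1 ^ 2) * Complex.exp (ν * p.2 ^ 2) := by
        simp_rw [key]
        exact Complex.volume_preserving_equiv_real_prod.integral_comp'
          (fun p : ℝ × ℝ => Complex.exp (ν * p.1 ^ 2) * Complex.exp (ν * p.2 ^ 2))
    _ = (∫ x : ℝ, Complex.exp (ν * x ^ 2)) * ∫ x : ℝ, Complex.exp (ν * x ^ 2) := by
        rw [MeasureTheory.Measure.volume_eq_prod]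
        exact integral_prod_mul (fun x : ℝ => Complex.exp (ν * x ^ 2))
          (fun x : ℝ => Complex.exp (ν * x ^ 2))
    _ = ↑Real.pi / (-ν) := by
        have h2 : ∀ x : ℝ, ν * (x:ℂ) ^ 2 = -(-ν) * (x:ℂ) ^ 2 := by intro x; ring_nf
        simp_rw [h2]
        rw [integral_gaussian_complex (by simpa using hν)]
        rw [← Complex.cpow_add _ _ hw]
        norm_num


variable (c : ℕ)

/-- The parallelepiped of the "complex standard basis over ℝ" in `Fin c → ℂ` is the
product of unit squares. -/
lemma para_pi :
    parallelepiped (fun p : Fin c × Fin 2 =>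
        (Pi.single p.1 (Complex.orthonormalBasisOneI p.2) : Fin c → ℂ))
      = Set.univ.pi (fun _ : Fin c => parallelepiped (⇑Complex.orthonormalBasisOneI)) := by
  ext m
  simp only [parallelepiped, Set.mem_image, Set.mem_pi, Set.mem_univ, forall_true_left]
  constructor
  · rintro ⟨t, ht, rfl⟩
    intro j
    refine ⟨fun k => t (j, k), ⟨?_, ?_⟩, ?_⟩
    · intro k; exact ht.1 (j, k)
    · intro k; exact ht.2 (j, k)
    · rw [Finset.sum_apply]
      rw [Fintype.sum_prod_type]
      simp only [Pi.smul_apply, Pi.single_apply]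
      rw [Finset.sum_eq_single j]
      · simp
      · intro b _ hb; simp [hb.symm]
      · simp
  · intro hm
    choose t ht hmt using hm
    refine ⟨fun p => t p.1 p.2, ⟨fun p => (ht p.1).1 p.2, fun p => (ht p.1).2 p.2⟩, ?_⟩
    funext j
    rw [Finset.sum_apply, Fintype.sum_prod_type]
    simp only [Pi.smul_apply, Pi.single_apply]
    rw [Finset.sum_eq_single j]
    · simpa using hmt j
    · intro b _ hb; simp [hb.symm]
    · simp

/-- The real orthonormal "basis" family of `EuclideanSpace ℂ (Fin c)`. -/
noncomputable def vON : Fin c × Fin 2 → EuclideanSpace ℂ (Fin c) :=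
  fun p => EuclideanSpace.single p.1 (Complex.orthonormalBasisOneI p.2)

lemma vON_orthonormal : Orthonormal ℝ (vON c) := by
  rw [orthonormal_iff_ite]
  intro p q
  obtain ⟨p1, p2⟩ := p
  obtain ⟨q1, q2⟩ := q
  have hrfl : (inner ℝ (vON c (p1, p2)) (vON c (q1, q2)) : ℝ)
      = ∑ j : Fin c, (inner ℝ ((vON c (p1, p2)) j) ((vON c (q1, q2)) j) : ℝ) := rfl
  rw [hrfl]
  have hON := orthonormal_iff_ite.mp Complex.orthonormalBasisOneI.orthonormal
  simp only [vON, EuclideanSpace.single_apply]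
  have hin : ∀ j : Fin c,
      (inner ℝ ((if j = p1 then Complex.orthonormalBasisOneI p2 else 0 : ℂ))
        ((if j = q1 then Complex.orthonormalBasisOneI q2 else 0 : ℂ)) : ℝ)
      = if j = p1 then (if j = q1 then
          (inner ℝ (Complex.orthonormalBasisOneI p2) (Complex.orthonormalBasisOneI q2) : ℝ)
          else 0) else 0 := by
    intro j
    rcases eq_or_ne j p1 with h | h <;> rcases eq_or_ne j q1 with h' | h'
    · subst h; subst h'; simp
    · subst h; rw [if_pos rfl, if_pos rfl, if_neg h', if_neg h', inner_zero_right]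
    · subst h'; rw [if_neg h, if_neg h, if_pos rfl, inner_zero_left]
    · rw [if_neg h, if_neg h, if_neg h', inner_zero_left]
  simp_rw [hin]
  simp only [Finset.sum_ite_eq', Finset.mem_univ, if_true]
  by_cases h1 : p1 = q1
  · subst h1
    rw [if_pos rfl, hON p2 q2]
    by_cases h2 : p2 = q2
    · subst h2; rw [if_pos rfl, if_pos rfl]
    · rw [if_neg h2, if_neg (by simp [Prod.ext_iff, h2])]
  · rw [if_neg h1, if_neg (by simp [Prod.ext_iff, h1])]

lemma vON_span : Submodule.span ℝ (Set.range (vON c)) = ⊤ := by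
  apply Submodule.eq_top_of_finrank_eq
  rw [finrank_span_eq_card (vON_orthonormal c).linearIndependent]
  have h1 : Module.finrank ℝ ℂ * Module.finrank ℂ (EuclideanSpace ℂ (Fin c))
      = Module.finrank ℝ (EuclideanSpace ℂ (Fin c)) := Module.finrank_mul_finrank ℝ ℂ _
  rw [finrank_euclideanSpace_fin, Complex.finrank_real_complex] at h1
  simp [← h1, mul_comm]

/-- The real orthonormal basis of `EuclideanSpace ℂ (Fin c)`. -/
noncomputable def bON : OrthonormalBasis (Fin c × Fin 2) ℝ (EuclideanSpace ℂ (Fin c)) :=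
  OrthonormalBasis.mk (vON_orthonormal c) (ge_of_eq (vON_span c))

lemma bON_apply (p : Fin c × Fin 2) : bON c p = vON c p := by
  simp [bON]

/-- `WithLp.equiv` as a continuous `ℝ`-linear equivalence. -/
noncomputable def cle : EuclideanSpace ℂ (Fin c) ≃L[ℝ] (Fin c → ℂ) :=
  { (WithLp.linearEquiv 2 ℂ (∀ _ : Fin c, ℂ)).restrictScalars ℝ with
    continuous_toFun := (PiLp.continuousLinearEquiv 2 ℂ (fun _ : Fin c => ℂ)).continuous
    continuous_invFun := (PiLp.continuousLinearEquiv 2 ℂ (fun _ : Fin c => ℂ)).symm.continuous }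

/-- `WithLp.equiv` as a measurable equivalence. -/
noncomputable def cmeq : EuclideanSpace ℂ (Fin c) ≃ᵐ (Fin c → ℂ) :=
  (cle c).toHomeomorph.toMeasurableEquiv

lemma volume_preserving_cmeq : MeasurePreserving (cmeq c) volume volume := by
  refine ⟨(cmeq c).measurable, ?_⟩
  rw [← (bON c).addHaar_eq_volume]
  have hmap : Measure.map (⇑(cle c)) (bON c).toBasis.addHaar
      = ((bON c).toBasis.map (cle c).toLinearEquiv).addHaar :=
    Module.Basis.map_addHaar _ (cle c)
  have hco : ⇑(cmeq c) = ⇑(cle c) := rfl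
  rw [hco, hmap, Module.Basis.addHaar_eq_iff]
  have hb : ⇑((bON c).toBasis.map (cle c).toLinearEquiv)
      = fun p : Fin c × Fin 2 =>
        (Pi.single p.1 (Complex.orthonormalBasisOneI p.2) : Fin c → ℂ) := by
    funext p
    rw [Module.Basis.map_apply, OrthonormalBasis.coe_toBasis, bON_apply]
    rfl
  rw [Module.Basis.coe_parallelepiped, hb, para_pi, MeasureTheory.volume_pi_pi]
  simp only [Complex.orthonormalBasisOneI.volume_parallelepiped]
  simp



lemma unitary_eigenbasis (n : ℕ) :
    ∀ (E : Type) (_ : NormedAddCommGroup E) (_ : InnerProductSpace ℂ E)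
      (_ : FiniteDimensional ℂ E), Module.finrank ℂ E = n →
      ∀ A : E ≃ₗᵢ[ℂ] E, ∃ (b : OrthonormalBasis (Fin n) ℂ E) (μ : Fin n → ℂ),
        ∀ i, A (b i) = μ i • b i := by
  induction n with
  | zero =>
    intro E _ _ _ hn A
    have hsub : Subsingleton E := by
      rw [← Module.finrank_zero_iff (R := ℂ)]; exact hn
    refine ⟨OrthonormalBasis.mk (v := Fin.elim0) ⟨fun i => i.elim0, fun i => i.elim0 ⟩ ?_,
      Fin.elim0, fun i => i.elim0⟩
    intro x _
    have : x = 0 := Subsingleton.elim x 0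
    rw [this]; exact Submodule.zero_mem _
  | succ m ih =>
    intro E _ _ _ hn A
    have : Nontrivial E := by
      exact Module.nontrivial_of_finrank_eq_succ hn
    obtain ⟨μ₀, hμ₀⟩ := Module.End.exists_eigenvalue (A.toLinearEquiv : E →ₗ[ℂ] E)
    obtain ⟨v, hv⟩ := hμ₀.exists_hasEigenvector
    set u : E := ((‖v‖⁻¹ : ℝ) : ℂ) • v with hu_def
    have hv0 : v ≠ 0 := hv.2
    have hu1 : ‖u‖ = 1 := by
      rw [hu_def, norm_smul, Complex.norm_real, norm_inv, norm_norm]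
      exact inv_mul_cancel₀ (norm_ne_zero_iff.mpr hv0)
    have hu0 : u ≠ 0 := by intro h; rw [h, norm_zero] at hu1; norm_num at hu1
    have hAv : A v = μ₀ • v := hv.apply_eq_smul
    have hAu : A u = μ₀ • u := by
      rw [hu_def, A.map_smul, hAv, smul_comm]
    have habs : ‖μ₀‖ = 1 := by
      have := A.norm_map u
      rw [hAu, norm_smul, hu1, mul_one] at this
      exact this
    have hμ₀0 : μ₀ ≠ 0 := by intro h; rw [h, norm_zero] at habs; norm_num at habs
    set K : Submodule ℂ E := (ℂ ∙ u)ᗮ with hK_def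
    have hKrank : Module.finrank ℂ K = m := by
      have h1 := Submodule.finrank_add_finrank_orthogonal (K := ℂ ∙ u)
      rw [finrank_span_singleton hu0, hn] at h1
      rw [hK_def]
      omega
    have hsymmu : A.symm u = μ₀⁻¹ • u := by
      rw [eq_inv_smul_iff₀ hμ₀0, ← A.symm.map_smul, ← hAu, A.symm_apply_apply]
    have hmapsto : ∀ w ∈ K, A w ∈ K := by
      intro w hw
      rw [hK_def, Submodule.mem_orthogonal_singleton_iff_inner_right] at hw ⊢
      calc ⟪u, A w⟫ = ⟪A (A.symm u), A w⟫ := by rw [A.apply_symm_apply]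
        _ = ⟪A.symm u, w⟫ := A.inner_map_map _ _
        _ = (starRingEnd ℂ) μ₀⁻¹ * ⟪u, w⟫ := by rw [hsymmu, inner_smul_left]
        _ = 0 := by rw [hw, mul_zero]
    letI Ares : K →ₗᵢ[ℂ] K :=
      { toLinearMap := (A.toLinearEquiv : E →ₗ[ℂ] E).restrict hmapsto
        norm_map' := fun x => A.norm_map x }
    letI AresE : K ≃ₗᵢ[ℂ] K := Ares.toLinearIsometryEquiv rfl
    obtain ⟨b', μ', hb'⟩ := ih K inferInstance inferInstance inferInstance hKrank AresE
    have hbK : ∀ i, (↑(b' i) : E) ∈ K := fun i => (b' i).2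
    have hinner_u_b : ∀ i, ⟪u, (b' i : E)⟫ = 0 := fun i =>
      Submodule.mem_orthogonal_singleton_iff_inner_right.mp (hbK i)
    set f : Fin (m + 1) → E := Fin.cons u (fun i => (b' i : E)) with hf_def
    have hON : Orthonormal ℂ f := by
      rw [orthonormal_iff_ite]
      intro i j
      refine Fin.cases ?_ ?_ i <;> [skip; intro i'] <;> refine Fin.cases ?_ ?_ j
      · simp only [hf_def, Fin.cons_zero, if_pos rfl]
        rw [inner_self_eq_norm_sq_to_K, hu1]; norm_num
      · intro j'
        simp only [hf_def, Fin.cons_zero, Fin.cons_succ]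
        rw [hinner_u_b j', if_neg (Fin.succ_ne_zero j').symm]
      · simp only [hf_def, Fin.cons_zero, Fin.cons_succ]
        rw [if_neg (Fin.succ_ne_zero i'), ← inner_conj_symm, hinner_u_b i', map_zero]
      · intro j'
        simp only [hf_def, Fin.cons_succ]
        have : ⟪(b' i' : E), (b' j' : E)⟫ = ⟪b' i', b' j'⟫ := rfl
        rw [this, orthonormal_iff_ite.mp b'.orthonormal i' j']
        simp [Fin.succ_inj]
    have hspan : ⊤ ≤ Submodule.span ℂ (Set.range f) := by
      rw [← Submodule.sup_orthogonal_of_hasOrthogonalProjection (K := ℂ ∙ u)]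
      apply sup_le
      · rw [Submodule.span_singleton_le_iff_mem]
        exact Submodule.subset_span ⟨0, by rw [hf_def, Fin.cons_zero]⟩
      · intro x hx
        have h2 : (⟨x, hx⟩ : K) ∈ Submodule.span ℂ (Set.range ⇑b') := by
          have h := b'.toBasis.span_eq
          rw [OrthonormalBasis.coe_toBasis] at h
          rw [h]; trivial
        have h4 : x ∈ Submodule.map K.subtype (Submodule.span ℂ (Set.range ⇑b')) :=
          ⟨⟨x, hx⟩, h2, rfl⟩
        rw [Submodule.map_span] at h4
        refine Submodule.span_mono ?_ h4
        rintro y ⟨y', ⟨i, rfl⟩, rfl⟩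
        exact ⟨i.succ, by rw [hf_def, Fin.cons_succ]; rfl⟩
    refine ⟨OrthonormalBasis.mk hON hspan, Fin.cons μ₀ μ', ?_⟩
    intro i
    rw [OrthonormalBasis.coe_mk]
    refine Fin.cases ?_ ?_ i
    · rw [hf_def]
      simp only [Fin.cons_zero]
      exact hAu
    · intro i'
      simp only [hf_def, Fin.cons_succ]
      have h5 : A (↑(b' i') : E) = ↑(AresE (b' i')) := by
        rw [Ares.coe_toLinearIsometryEquiv]
        rfl
      rw [h5, hb' i']
      rfl

lemma psi2_eq {V : Type*} [NormedAddCommGroup V] [InnerProductSpace ℂ V]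
    (A : V ≃ₗᵢ[ℂ] V) (n : V) : psi2 (A n) n = ⟪A n - n, n⟫ := by
  set z := ⟪A n, n⟫ with hzdef
  have h1 : ‖A n - n‖ ^ 2 = 2 * ‖n‖ ^ 2 - 2 * z.re := by
    have h := @norm_sub_sq ℂ _ _ _ _ (A n) n
    rw [A.norm_map] at h
    simp only [RCLike.re_to_complex] at h
    rw [h, ← hzdef]
    ring
  have h3 : ⟪A n - n, n⟫ = z - ((‖n‖ : ℝ) : ℂ) ^ 2 := by
    rw [inner_sub_left, inner_self_eq_norm_sq_to_K, ← hzdef]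
    rfl
  rw [psi2, h3]
  have h2 : ((‖A n - n‖ : ℂ)) ^ 2 = ((2 * ‖n‖ ^ 2 - 2 * z.re : ℝ) : ℂ) := by
    rw [← Complex.ofReal_pow, h1]
  rw [h2, ← hzdef]
  conv_rhs => rw [← Complex.re_add_im z]
  apply Complex.ext <;> simp <;> ring


end Aux

/-- The one-dimensional Gaussian `∫ e^{−2λ²} dλ = √(π/2)`; the complex
Gaussian `∫ e^{ψ₂(An,n)} dn = πᶜ/|det(I − A⁻¹)| · (phase)`; and the combined
integral `∫∫ e^{ψ₂(An,n) − 2λ²} dλ dn = (1/√2) π^{c+1/2} / D` with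
`D = det_ℂ(I − A⁻¹)`. -/
theorem stmt_15 (c : ℕ)
    (A : EuclideanSpace ℂ (Fin c) ≃ₗᵢ[ℂ] EuclideanSpace ℂ (Fin c))
    (hinv : Function.Bijective fun n : EuclideanSpace ℂ (Fin c) => A n - n) :
    let D : ℂ := LinearMap.det
      ((LinearMap.id : EuclideanSpace ℂ (Fin c) →ₗ[ℂ] EuclideanSpace ℂ (Fin c))
        - A.symm.toLinearEquiv.toLinearMap)
    (∫ l : ℝ, Real.exp (-2 * l ^ 2)) = Real.sqrt (π / 2) ∧
    (∃ phase : ℂ, ‖phase‖ = 1 ∧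
      (∫ n : EuclideanSpace ℂ (Fin c), Complex.exp (psi2 (A n) n))
        = ((π ^ c / ‖D‖ : ℝ) : ℂ) * phase) ∧
    (∫ n : EuclideanSpace ℂ (Fin c), ∫ l : ℝ,
        Complex.exp (psi2 (A n) n - 2 * (l : ℂ) ^ 2))
      = (((1 / Real.sqrt 2) * π ^ ((c : ℝ) + 1 / 2) : ℝ) : ℂ) / D := by
  intro D
  obtain ⟨b, μ, hbμ⟩ := unitary_eigenbasis c (EuclideanSpace ℂ (Fin c)) inferInstance inferInstance inferInstance
    finrank_euclideanSpace_fin A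
  have hbnorm : ∀ i, ‖b i‖ = 1 := fun i => b.orthonormal.1 i
  have habs : ∀ i, ‖μ i‖ = 1 := by
    intro i
    have h := A.norm_map (b i)
    rw [hbμ i, norm_smul, hbnorm i, mul_one] at h
    exact h
  have hμ0 : ∀ i, μ i ≠ 0 := by
    intro i h
    have h2 := habs i
    rw [h, norm_zero] at h2
    norm_num at h2
  have hb0ne : ∀ i, b i ≠ (0 : EuclideanSpace ℂ (Fin c)) := by
    intro i h
    have h2 := hbnorm i
    rw [h, norm_zero] at h2
    norm_num at h2
  have hμ1 : ∀ i, μ i ≠ 1 := by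
    intro i h
    have h0 : (fun n : EuclideanSpace ℂ (Fin c) => A n - n) (b i)
        = (fun n : EuclideanSpace ℂ (Fin c) => A n - n) 0 := by
      simp [hbμ i, h]
    exact hb0ne i (by simpa using hinv.1 h0)
  have hμinv : ∀ i, (μ i)⁻¹ = (starRingEnd ℂ) (μ i) := by
    intro i
    rw [Complex.inv_def, Complex.normSq_eq_norm_sq, habs i]
    norm_num
  have hAsymm : ∀ i, A.symm (b i) = (μ i)⁻¹ • b i := by
    intro i
    rw [eq_inv_smul_iff₀ (hμ0 i), ← A.symm.map_smul, ← hbμ i, A.symm_apply_apply]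
  have hD : D = ∏ i, (1 - (μ i)⁻¹) := by
    show LinearMap.det _ = _
    rw [← LinearMap.det_toMatrix b.toBasis]
    have hM : LinearMap.toMatrix b.toBasis b.toBasis
        (LinearMap.id - A.symm.toLinearEquiv.toLinearMap)
        = Matrix.diagonal (fun i => 1 - (μ i)⁻¹) := by
      ext i j
      rw [LinearMap.toMatrix_apply]
      have happ : ((LinearMap.id - A.symm.toLinearEquiv.toLinearMap :
            EuclideanSpace ℂ (Fin c) →ₗ[ℂ] EuclideanSpace ℂ (Fin c))) (b.toBasis j)
          = (1 - (μ j)⁻¹) • b j := by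
        rw [LinearMap.sub_apply, LinearMap.id_apply, OrthonormalBasis.coe_toBasis]
        have h5 : A.symm.toLinearEquiv.toLinearMap (b j) = A.symm (b j) := rfl
        rw [h5, hAsymm j, sub_smul, one_smul]
      rw [happ]
      have h6 : b.toBasis.repr ((1 - (μ j)⁻¹) • b j)
          = (1 - (μ j)⁻¹) • b.toBasis.repr (b j) := by
        exact map_smul _ _ _
      rw [h6]
      have h7 : b.toBasis.repr (b j) = Finsupp.single j 1 := by
        rw [← OrthonormalBasis.coe_toBasis b]
        exact b.toBasis.repr_self j
      rw [h7, Finsupp.smul_apply, Finsupp.single_apply, Matrix.diagonal_apply]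
      by_cases h : i = j
      · subst h; simp
      · simp [h, Ne.symm h]
    rw [hM, Matrix.det_diagonal]
  have hD0 : D ≠ 0 := by
    rw [hD]
    apply Finset.prod_ne_zero_iff.mpr
    intro i _ h
    rw [sub_eq_zero] at h
    exact hμ1 i (inv_eq_one.mp h.symm)
  have hreprA : ∀ (n : EuclideanSpace ℂ (Fin c)) i, b.repr (A n) i = μ i * b.repr n i := by
    intro n i
    rw [OrthonormalBasis.repr_apply_apply, OrthonormalBasis.repr_apply_apply]
    calc (inner ℂ (b i) (A n) : ℂ) = inner ℂ (A (A.symm (b i))) (A n) := by rw [A.apply_symm_apply]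
      _ = inner ℂ (A.symm (b i)) n := A.inner_map_map _ _
      _ = (starRingEnd ℂ) ((μ i)⁻¹) * inner ℂ (b i) n := by rw [hAsymm i, inner_smul_left]
      _ = μ i * inner ℂ (b i) n := by rw [hμinv i, Complex.conj_conj]
  have hinner : ∀ n : EuclideanSpace ℂ (Fin c),
      (inner ℂ (A n - n) n : ℂ)
        = ∑ i, ((starRingEnd ℂ) (μ i) - 1) * ((Complex.normSq (b.repr n i) : ℝ) : ℂ) := by
    intro n
    rw [← b.repr.inner_map_map (A n - n) n, PiLp.inner_apply]
    apply Finset.sum_congr rfl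
    intro i _
    have hx : b.repr (A n - n) i = (μ i - 1) * b.repr n i := by
      have h8 : b.repr (A n - n) = b.repr (A n) - b.repr n := map_sub _ _ _
      rw [h8]
      have h9 : (b.repr (A n) - b.repr n) i = b.repr (A n) i - b.repr n i := rfl
      rw [h9, hreprA n i]
      ring
    rw [RCLike.inner_apply, hx, map_mul, map_sub, map_one, mul_left_comm, mul_comm (b.repr n i)]
    have h10 : (starRingEnd ℂ) (b.repr n i) * b.repr n i
        = ((Complex.normSq (b.repr n i) : ℝ) : ℂ) := by
      rw [mul_comm, Complex.mul_conj]
    rw [h10]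
  have hνre : ∀ i, ((starRingEnd ℂ) (μ i) - 1).re < 0 := by
    intro i
    have h1 : (μ i).re ≤ 1 := by
      have h2 := Complex.re_le_norm (μ i)
      rwa [habs i] at h2
    have h3 : (μ i).re ≠ 1 := by
      intro h
      apply hμ1 i
      have h4 : Complex.normSq (μ i) = 1 := by
        rw [Complex.normSq_eq_norm_sq, habs i]; norm_num
      rw [Complex.normSq_apply, h] at h4
      have h5 : (μ i).im = 0 := by nlinarith
      apply Complex.ext <;> simp [h, h5]
    simp only [Complex.sub_re, Complex.conj_re, Complex.one_re]
    exact sub_neg.mpr (lt_of_le_of_ne h1 h3)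
  have hmν : ∀ i, -((starRingEnd ℂ) (μ i) - 1) = 1 - (μ i)⁻¹ := by
    intro i; rw [hμinv i]; ring
  letI bR : EuclideanSpace ℂ (Fin c) ≃ₗᵢ[ℝ] EuclideanSpace ℂ (Fin c) :=
    { toLinearEquiv := b.repr.toLinearEquiv.restrictScalars ℝ
      norm_map' := b.repr.norm_map }
  have hmain : (∫ n : EuclideanSpace ℂ (Fin c), Complex.exp (psi2 (A n) n))
      = (π : ℂ) ^ c / D := by
    have step1 : (∫ n : EuclideanSpace ℂ (Fin c), Complex.exp (psi2 (A n) n))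
        = ∫ n : EuclideanSpace ℂ (Fin c), Complex.exp
            (∑ i, ((starRingEnd ℂ) (μ i) - 1) * ((Complex.normSq ((b.repr n) i) : ℝ) : ℂ)) := by
      congr 1
      funext n
      rw [psi2_eq A n, hinner n]
    have step2 : (∫ n : EuclideanSpace ℂ (Fin c), Complex.exp
            (∑ i, ((starRingEnd ℂ) (μ i) - 1) * ((Complex.normSq ((b.repr n) i) : ℝ) : ℂ)))
        = ∫ x : EuclideanSpace ℂ (Fin c), Complex.exp
            (∑ i, ((starRingEnd ℂ) (μ i) - 1) * ((Complex.normSq (x i) : ℝ) : ℂ)) :=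
      bR.measurePreserving.integral_comp' (f := bR.toMeasurableEquiv)
        (fun x => Complex.exp
          (∑ i, ((starRingEnd ℂ) (μ i) - 1) * ((Complex.normSq (x i) : ℝ) : ℂ)))
    have step3 : (∫ x : EuclideanSpace ℂ (Fin c), Complex.exp
            (∑ i, ((starRingEnd ℂ) (μ i) - 1) * ((Complex.normSq (x i) : ℝ) : ℂ)))
        = ∫ m : Fin c → ℂ, Complex.exp
            (∑ i, ((starRingEnd ℂ) (μ i) - 1) * ((Complex.normSq (m i) : ℝ) : ℂ)) :=
      (volume_preserving_cmeq c).integral_comp'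
        (fun m => Complex.exp
          (∑ i, ((starRingEnd ℂ) (μ i) - 1) * ((Complex.normSq (m i) : ℝ) : ℂ)))
    have step4 : (∫ m : Fin c → ℂ, Complex.exp
            (∑ i, ((starRingEnd ℂ) (μ i) - 1) * ((Complex.normSq (m i) : ℝ) : ℂ)))
        = ∏ i, ∫ z : ℂ, Complex.exp (((starRingEnd ℂ) (μ i) - 1) * ((Complex.normSq z : ℝ) : ℂ)) := by
      have h11 : ∀ m : Fin c → ℂ, Complex.exp
            (∑ i, ((starRingEnd ℂ) (μ i) - 1) * ((Complex.normSq (m i) : ℝ) : ℂ))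
          = ∏ i, Complex.exp (((starRingEnd ℂ) (μ i) - 1) * ((Complex.normSq (m i) : ℝ) : ℂ)) :=
        fun m => Complex.exp_sum _ _
      simp_rw [h11]
      exact integral_fintype_prod_eq_prod (ι := Fin c)
        (f := fun i z => Complex.exp (((starRingEnd ℂ) (μ i) - 1) * ((Complex.normSq z : ℝ) : ℂ)))
    rw [step1, step2, step3, step4]
    have step5 : ∀ i ∈ Finset.univ, (∫ z : ℂ, Complex.exp
          (((starRingEnd ℂ) (μ i) - 1) * ((Complex.normSq z : ℝ) : ℂ)))
        = (π : ℂ) / (1 - (μ i)⁻¹) := by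
      intro i _
      rw [integral_cexp_nu _ (hνre i), hmν i]
    rw [Finset.prod_congr rfl step5, Finset.prod_div_distrib, Finset.prod_const,
      Finset.card_univ, Fintype.card_fin, ← hD]
  refine ⟨integral_gaussian 2, ⟨((‖D‖ : ℝ) : ℂ) / D, ?_, ?_⟩, ?_⟩
  · rw [norm_div, Complex.norm_real, norm_norm]
    exact div_self (norm_ne_zero_iff.mpr hD0)
  · rw [hmain]
    have habsD : ((‖D‖ : ℝ) : ℂ) ≠ 0 := by
      exact_mod_cast norm_ne_zero_iff.mpr hD0
    push_cast
    field_simp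
  · have hin3 : ∀ n : EuclideanSpace ℂ (Fin c),
        (∫ l : ℝ, Complex.exp (psi2 (A n) n - 2 * (l : ℂ) ^ 2))
          = Complex.exp (psi2 (A n) n) * ((π : ℂ) / 2) ^ (1 / 2 : ℂ) := by
      intro n
      have h6 : ∀ l : ℝ, Complex.exp (psi2 (A n) n - 2 * (l : ℂ) ^ 2)
          = Complex.exp (psi2 (A n) n) * Complex.exp (-(2 : ℂ) * (l : ℂ) ^ 2) := by
        intro l
        rw [← Complex.exp_add]
        ring_nf
      simp_rw [h6]
      rw [MeasureTheory.integral_const_mul,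
        integral_gaussian_complex (by norm_num : (0:ℝ) < (2:ℂ).re)]
    have h12 : (∫ n : EuclideanSpace ℂ (Fin c), ∫ l : ℝ,
          Complex.exp (psi2 (A n) n - 2 * (l : ℂ) ^ 2))
        = ∫ n : EuclideanSpace ℂ (Fin c),
            Complex.exp (psi2 (A n) n) * ((π : ℂ) / 2) ^ (1 / 2 : ℂ) := by
      congr 1
      funext n
      exact hin3 n
    rw [h12, MeasureTheory.integral_mul_const, hmain]
    have hcpow : ((π : ℂ) / 2) ^ (1 / 2 : ℂ) = ((Real.sqrt (π / 2) : ℝ) : ℂ) := by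
      rw [show ((π:ℂ)/2) = ((π/2 : ℝ) : ℂ) by push_cast; ring,
        show (1/2 : ℂ) = ((1/2 : ℝ) : ℂ) by norm_num]
      rw [← Complex.ofReal_cpow (by positivity) (1/2 : ℝ)]
      rw [← Real.sqrt_eq_rpow]
    rw [hcpow]
    have hreal : (1 / Real.sqrt 2) * π ^ ((c : ℝ) + 1 / 2)
        = π ^ c * Real.sqrt (π / 2) := by
      rw [Real.rpow_add pi_pos, Real.rpow_natCast, ← Real.sqrt_eq_rpow,
        Real.sqrt_div pi_pos.le 2]
      ring
    rw [hreal]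
    push_cast
    rw [div_mul_eq_mul_div]
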